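/- arXiv:1812.03456 — 2 statements merged into one kernel-verified Lean document; each statement's English description precedes it below -/
import Mathlib

section
/- In the simplex setting, for every real number λ, Δ² − λΔ = (1/h_m²) · ( Σ_{σ∈A_m} σ(Δ_{m−1}² − λ h_m Δ_{m−1}) + X_m ), where X_m = Σ_{σ∈A_m} ( σ(Δ_{m−1}) · Σ_{τ∈A_m, τ≠σ} τ(Δ_{m−1}) ) and h_m = (m−2)·(m−1)!/2. -/
noncomputable section
open scoped Classical

/-- The Laplacian `Δ = |S|·1 - Σ_{s ∈ S} s` in the real group algebra `ℝ[G]`. -/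
def lap {G : Type*} [Group G] (S : Finset G) : MonoidAlgebra ℝ G :=
  (S.card : MonoidAlgebra ℝ G) - ∑ s ∈ S, MonoidAlgebra.of ℝ G s

/-- The star involution on `ℝ[G]` induced by `g ↦ g⁻¹`. -/
def starG {G : Type*} [Group G] (x : MonoidAlgebra ℝ G) : MonoidAlgebra ℝ G :=
  MonoidAlgebra.ofCoeff (Finsupp.mapDomain (fun g => g⁻¹) x.coeff)

/-- `g` lies in the ball of radius `R` about the identity in the word metric
induced by the (symmetric) set `S`. -/
def inBall {G : Type*} [Group G] (S : Set G) (R : ℕ) (g : G) : Prop :=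
  ∃ l : List G, (∀ x ∈ l, x ∈ S) ∧ l.length ≤ R ∧ l.prod = g

/-- `x ∈ Σ²_R ℝ[G]`: `x` is a finite sum of hermitian squares `ξ_i* ξ_i` with each
`ξ_i` supported in the ball of radius `R` about the identity. -/
def SOS {G : Type*} [Group G] (S : Set G) (R : ℕ) (x : MonoidAlgebra ℝ G) : Prop :=
  ∃ (N : ℕ) (ξ : Fin N → MonoidAlgebra ℝ G),
    (∀ i, ∀ g ∈ (ξ i).coeff.support, inBall S R g) ∧
    x = ∑ i, starG (ξ i) * ξ i

/-- The simplex setting: a group `G` with a finite symmetric generating set `S`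
(with `1 ∉ S`), an action of the alternating group `A_m` on `G` by automorphisms
preserving `S`, and an `A_m`-equivariant labelling of `S` by edges (2-element
subsets) of `{1,…,m}` such that generators with disjoint labels commute. -/
structure SimplexSetting (m : ℕ) (G : Type*) [Group G] where
  S : Finset G
  one_not_mem : (1 : G) ∉ S
  symm : ∀ s ∈ S, s⁻¹ ∈ S
  generates : Subgroup.closure (S : Set G) = ⊤
  act : alternatingGroup (Fin m) →* MulAut G
  act_mem : ∀ (σ : alternatingGroup (Fin m)), ∀ s ∈ S, act σ s ∈ S
  lbl : G → Finset (Fin m)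
  lbl_card : ∀ s ∈ S, (lbl s).card = 2
  lbl_equivariant : ∀ (σ : alternatingGroup (Fin m)), ∀ s ∈ S,
    lbl (act σ s) = (lbl s).image (σ : Equiv.Perm (Fin m))
  comm : ∀ s ∈ S, ∀ t ∈ S, Disjoint (lbl s) (lbl t) → Commute s t

namespace SimplexSetting

variable {m : ℕ} {G : Type*} [Group G] (P : SimplexSetting m G)

/-- The set `E_n` of edges of the simplex spanned by the first `n` vertices. -/
def edges (m n : ℕ) : Finset (Finset (Fin m)) :=
  Finset.univ.filter (fun e => e.card = 2 ∧ ∀ i ∈ e, (i : ℕ) < n)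

/-- `S_e`: the generators labelled by the edge `e`. -/
def Se (e : Finset (Fin m)) : Finset G := P.S.filter (fun s => P.lbl s = e)

/-- The edge Laplacian `Δ_e = |S_e|·1 - Σ_{t ∈ S_e} t`. -/
def De (e : Finset (Fin m)) : MonoidAlgebra ℝ G :=
  ((P.Se e).card : MonoidAlgebra ℝ G) - ∑ t ∈ P.Se e, MonoidAlgebra.of ℝ G t

/-- `Δ_n = Σ_{e ∈ E_n} Δ_e`. -/
def Dn (n : ℕ) : MonoidAlgebra ℝ G := ∑ e ∈ edges m n, P.De e

/-- `Sq_n = Σ_{e ∈ E_n} Δ_e²`. -/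
def Sq (n : ℕ) : MonoidAlgebra ℝ G := ∑ e ∈ edges m n, (P.De e) ^ 2

/-- `Adj_n`: the sum of `Δ_e Δ_f` over ordered pairs of edges of `E_n` sharing
exactly one vertex. -/
def Adj (n : ℕ) : MonoidAlgebra ℝ G :=
  ∑ e ∈ edges m n, ∑ f ∈ (edges m n).filter (fun f => (e ∩ f).card = 1), P.De e * P.De f

/-- `Op_n`: the sum of `Δ_e Δ_f` over ordered pairs of disjoint edges of `E_n`. -/
def Op (n : ℕ) : MonoidAlgebra ℝ G :=
  ∑ e ∈ edges m n, ∑ f ∈ (edges m n).filter (fun f => e ∩ f = ∅), P.De e * P.De f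

/-- The induced action of `A_m` on the group algebra `ℝ[G]`. -/
def algAct (σ : alternatingGroup (Fin m)) (x : MonoidAlgebra ℝ G) : MonoidAlgebra ℝ G :=
  MonoidAlgebra.ofCoeff (Finsupp.mapDomain (P.act σ) x.coeff)

/-- `h_n = (n-2)·(n-1)!/2`, as a real number. -/
def hr (n : ℕ) : ℝ := ((n : ℝ) - 2) * (Nat.factorial (n - 1)) / 2

end SimplexSetting

open SimplexSetting

/-! ### Auxiliary lemmas -/

section Aux

variable {m : ℕ}

abbrev Am (m : ℕ) := alternatingGroup (Fin m)

lemma exists_perm_two {a b c d : Fin m} (hab : a ≠ b) (hcd : c ≠ d) :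
    ∃ g : Equiv.Perm (Fin m), g a = c ∧ g b = d := by
  classical
  set b' := Equiv.swap a c b with hb'
  have hb'c : b' ≠ c := by
    intro h
    have : Equiv.swap a c b = Equiv.swap a c a := by
      rw [← hb'] at *; rw [h, Equiv.swap_apply_left]
    exact hab ((Equiv.injective _ this).symm)
  refine ⟨Equiv.swap b' d * Equiv.swap a c, ?_, ?_⟩
  · simp only [Equiv.Perm.mul_apply, Equiv.swap_apply_left]
    exact Equiv.swap_apply_of_ne_of_ne (Ne.symm hb'c) hcd
  · simp only [Equiv.Perm.mul_apply, ← hb', Equiv.swap_apply_left]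

lemma exists_alt_image {e f : Finset (Fin m)} (he : e.card = 2) (hf : f.card = 2) :
    ∃ σ : Am m, e.image ⇑(σ : Equiv.Perm (Fin m)) = f := by
  classical
  obtain ⟨a, b, hab, rfl⟩ := Finset.card_eq_two.mp he
  obtain ⟨c, d, hcd, rfl⟩ := Finset.card_eq_two.mp hf
  obtain ⟨g, hga, hgb⟩ := exists_perm_two hab hcd
  rcases Int.units_eq_one_or (Equiv.Perm.sign g) with hs | hs
  · exact ⟨⟨g, Equiv.Perm.mem_alternatingGroup.mpr hs⟩, by
      simp [Finset.image_insert, hga, hgb]⟩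
  · refine ⟨⟨g * Equiv.swap a b, Equiv.Perm.mem_alternatingGroup.mpr ?_⟩, ?_⟩
    · rw [Equiv.Perm.sign_mul, hs, Equiv.Perm.sign_swap hab]; decide
    · simp only [Finset.image_insert, Finset.image_singleton, Equiv.Perm.mul_apply,
        Equiv.swap_apply_left, Equiv.swap_apply_right, hga, hgb]
      exact Finset.pair_comm d c

lemma image_coe_mul (e : Finset (Fin m)) (a b : Am m) :
    e.image ⇑((a * b : Am m) : Equiv.Perm (Fin m))
      = (e.image ⇑(b : Equiv.Perm (Fin m))).image ⇑(a : Equiv.Perm (Fin m)) := by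
  simp [Finset.image_image, Equiv.Perm.coe_mul]

lemma image_coe_one (e : Finset (Fin m)) :
    e.image ⇑((1 : Am m) : Equiv.Perm (Fin m)) = e := by simp

/-- The cardinality of the stabilizer of `e` in `A_m` (acting on finsets by image). -/
def stabCard (m : ℕ) (e : Finset (Fin m)) : ℕ :=
  (Finset.univ.filter (fun σ : Am m => e.image ⇑(σ : Equiv.Perm (Fin m)) = e)).card

lemma fiber_card_eq {e f : Finset (Fin m)} (he : e.card = 2) (hf : f.card = 2) :
    (Finset.univ.filter (fun σ : Am m => e.image ⇑(σ : Equiv.Perm (Fin m)) = f)).card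
      = stabCard m e := by
  classical
  obtain ⟨τ, hτ⟩ := exists_alt_image hf he
  have hinv : e.image ⇑((τ⁻¹ : Am m) : Equiv.Perm (Fin m)) = f := by
    have := image_coe_mul f τ⁻¹ τ
    rw [hτ] at this
    simpa [image_coe_one] using this.symm
  refine Finset.card_bij' (fun σ _ => τ * σ) (fun σ _ => τ⁻¹ * σ) ?_ ?_ ?_ ?_
  · intro σ hσ
    simp only [Finset.mem_filter, Finset.mem_univ, true_and] at hσ ⊢
    rw [image_coe_mul, hσ, hτ]
  · intro σ hσ
    simp only [Finset.mem_filter, Finset.mem_univ, true_and] at hσ ⊢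
    rw [image_coe_mul, hσ, hinv]
  · intro σ _; group
  · intro σ _; group

lemma mem_edges {n : ℕ} {e : Finset (Fin m)} :
    e ∈ edges m n ↔ e.card = 2 ∧ ∀ i ∈ e, (i : ℕ) < n := by
  simp [edges]

lemma card_of_mem_edges {n : ℕ} {e : Finset (Fin m)} (h : e ∈ edges m n) : e.card = 2 :=
  (mem_edges.mp h).1

lemma image_mem_edges_top (σ : Am m) {e : Finset (Fin m)} (he : e.card = 2) :
    e.image ⇑(σ : Equiv.Perm (Fin m)) ∈ edges m m := by
  rw [mem_edges]
  refine ⟨?_, fun i _ => i.isLt⟩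
  rw [Finset.card_image_of_injective _ (Equiv.injective _)]; exact he

lemma orbit_sum {M : Type*} [AddCommMonoid M] {e : Finset (Fin m)} (he : e.card = 2)
    (v : Finset (Fin m) → M) :
    ∑ σ : Am m, v (e.image ⇑(σ : Equiv.Perm (Fin m)))
      = stabCard m e • ∑ f ∈ edges m m, v f := by
  classical
  rw [Finset.smul_sum,
    ← Finset.sum_fiberwise_of_maps_to' (fun σ _ => image_mem_edges_top σ he) v]
  refine Finset.sum_congr rfl fun f hf => ?_
  rw [Finset.sum_const, fiber_card_eq he (card_of_mem_edges hf)]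

lemma stab_mul_card {e : Finset (Fin m)} (he : e.card = 2) :
    stabCard m e * (edges m m).card = Fintype.card (Am m) := by
  classical
  have h := Finset.card_eq_sum_card_fiberwise
    (f := fun σ : Am m => e.image ⇑(σ : Equiv.Perm (Fin m)))
    (s := Finset.univ) (t := edges m m) (fun σ _ => image_mem_edges_top σ he)
  rw [Finset.card_univ] at h
  rw [h]
  rw [Finset.sum_congr rfl (fun f hf => fiber_card_eq he (card_of_mem_edges hf)),
    Finset.sum_const, smul_eq_mul, mul_comm]

lemma filter_lt_card {n : ℕ} (hn : n ≤ m) :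
    (Finset.univ.filter (fun i : Fin m => (i : ℕ) < n)).card = n := by
  have : (Finset.univ.filter (fun i : Fin m => (i : ℕ) < n))
      = Finset.map (Fin.castLEEmb hn) Finset.univ := by
    ext i
    simp only [Finset.mem_filter, Finset.mem_univ, true_and, Finset.mem_map]
    constructor
    · intro h
      refine ⟨⟨(i : ℕ), h⟩, ?_⟩
      ext
      simp [Fin.castLEEmb]
    · rintro ⟨j, rfl⟩; simp [Fin.castLEEmb]
  rw [this, Finset.card_map, Finset.card_univ, Fintype.card_fin]

lemma card_edges {n : ℕ} (hn : n ≤ m) : (edges m n).card = n.choose 2 := by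
  classical
  have : edges m n
      = Finset.powersetCard 2 (Finset.univ.filter (fun i : Fin m => (i : ℕ) < n)) := by
    ext e
    simp only [mem_edges, Finset.mem_powersetCard, Finset.subset_iff, Finset.mem_filter,
      Finset.mem_univ, true_and]
    tauto
  rw [this, Finset.card_powersetCard, filter_lt_card hn]

end Aux

section PAux

variable {m : ℕ} {G : Type*} [Group G] (P : SimplexSetting m G)

lemma algAct_eq_hom (σ : Am m) :
    P.algAct σ = ⇑(MonoidAlgebra.mapDomainAlgHom ℝ ℝ ((P.act σ : MulAut G) : G →* G)) := rfl

lemma Se_image (σ : Am m) (e : Finset (Fin m)) :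
    P.Se (e.image ⇑(σ : Equiv.Perm (Fin m))) = (P.Se e).image (P.act σ) := by
  classical
  ext t
  simp only [SimplexSetting.Se, Finset.mem_filter, Finset.mem_image]
  constructor
  · rintro ⟨hS, hl⟩
    refine ⟨P.act σ⁻¹ t, ⟨P.act_mem σ⁻¹ t hS, ?_⟩, ?_⟩
    · rw [P.lbl_equivariant σ⁻¹ t hS, hl]
      have h2 := (image_coe_mul e σ⁻¹ σ).symm
      rw [inv_mul_cancel, image_coe_one] at h2
      exact h2
    · have : (P.act σ) ((P.act σ⁻¹) t) = (P.act (σ * σ⁻¹)) t := by rw [map_mul]; rfl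
      rw [this, mul_inv_cancel, map_one]; rfl
  · rintro ⟨s, ⟨hS, hl⟩, rfl⟩
    exact ⟨P.act_mem σ s hS, by rw [P.lbl_equivariant σ s hS, hl]⟩

lemma De_image (σ : Am m) (e : Finset (Fin m)) :
    P.algAct σ (P.De e) = P.De (e.image ⇑(σ : Equiv.Perm (Fin m))) := by
  classical
  rw [algAct_eq_hom]
  simp only [SimplexSetting.De, map_sub, map_natCast, map_sum]
  rw [Se_image, Finset.card_image_of_injective _ (P.act σ).injective]
  congr 1
  rw [Finset.sum_image (fun a _ b _ h => (P.act σ).injective h)]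
  refine Finset.sum_congr rfl fun t _ => ?_
  simp [MonoidAlgebra.of_apply, MonoidAlgebra.mapDomainAlgHom_apply, Finsupp.mapDomain_single]

lemma lap_eq_Dn_top : lap P.S = P.Dn m := by
  classical
  have hmaps : ∀ s ∈ P.S, P.lbl s ∈ edges m m := fun s hs =>
    mem_edges.mpr ⟨P.lbl_card s hs, fun i _ => i.isLt⟩
  unfold lap SimplexSetting.Dn
  simp only [SimplexSetting.De]
  rw [Finset.sum_sub_distrib]
  congr 1
  · rw [← Nat.cast_sum]
    exact congrArg _ (Finset.card_eq_sum_card_fiberwise hmaps)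
  · exact (Finset.sum_fiberwise_of_maps_to hmaps _).symm

lemma sum_stab_eq (hm : 3 ≤ m) :
    ((∑ e ∈ edges m (m - 1), stabCard m e : ℕ) : ℝ) = hr m := by
  classical
  haveI : Nontrivial (Fin m) := by
    refine ⟨⟨0, by omega⟩, ⟨1, by omega⟩, ?_⟩
    intro h; exact absurd (congrArg Fin.val h) (by simp)
  set K : ℕ := ∑ e ∈ edges m (m - 1), stabCard m e with hK
  have hKE : K * (edges m m).card = (edges m (m - 1)).card * Fintype.card (Am m) := by
    rw [hK, Finset.sum_mul,
      Finset.sum_congr rfl (fun e he => stab_mul_card (card_of_mem_edges he)),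
      Finset.sum_const, smul_eq_mul]
  rw [card_edges le_rfl, card_edges (Nat.sub_le m 1)] at hKE
  have hA : 2 * Fintype.card (Am m) = Nat.factorial m := by
    rw [two_mul_card_alternatingGroup, Fintype.card_perm, Fintype.card_fin]
  set M : ℝ := (m : ℝ) with hM
  have hM3 : (3 : ℝ) ≤ M := by rw [hM]; exact_mod_cast hm
  have hm1 : ((m - 1 : ℕ) : ℝ) = M - 1 := by
    rw [hM, Nat.cast_sub (by omega : 1 ≤ m)]; norm_num
  set F : ℝ := ((m - 1).factorial : ℝ) with hF
  have hfact : (m.factorial : ℝ) = M * F := by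
    rw [hM, hF, ← Nat.mul_factorial_pred (by omega : m ≠ 0)]; push_cast; ring
  have hcast : (K : ℝ) * (M * (M - 1) / 2)
      = ((M - 1) * ((M - 1) - 1) / 2) * (Fintype.card (Am m) : ℝ) := by
    have h0 := congrArg (Nat.cast : ℕ → ℝ) hKE
    push_cast [Nat.cast_choose_two] at h0
    rw [hm1] at h0
    linear_combination h0
  have hAcast : 2 * (Fintype.card (Am m) : ℝ) = M * F := by
    have h0 := congrArg (Nat.cast : ℕ → ℝ) hA
    push_cast at h0
    rw [h0, hfact]
  have hne : M * (M - 1) / 2 ≠ 0 := by nlinarith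
  have h5 : (K : ℝ) * (M * (M - 1) / 2) = ((M - 2) * F / 2) * (M * (M - 1) / 2) := by
    linear_combination hcast + ((M - 1) * (M - 2) / 4) * hAcast
  rw [mul_right_cancel₀ hne h5]
  simp only [SimplexSetting.hr, hM, hF]

lemma sum_algAct_Dn (hm : 3 ≤ m) :
    ∑ σ : Am m, P.algAct σ (P.Dn (m - 1)) = hr m • lap P.S := by
  classical
  have h1 : ∀ σ : Am m, P.algAct σ (P.Dn (m - 1))
      = ∑ e ∈ edges m (m - 1), P.De (e.image ⇑(σ : Equiv.Perm (Fin m))) := by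
    intro σ
    rw [algAct_eq_hom]
    unfold SimplexSetting.Dn
    rw [map_sum]
    exact Finset.sum_congr rfl fun e _ => by rw [← algAct_eq_hom, De_image]
  have h2 : (∑ σ : Am m, P.algAct σ (P.Dn (m - 1)))
      = (∑ e ∈ edges m (m - 1), stabCard m e) • P.Dn m := by
    calc ∑ σ : Am m, P.algAct σ (P.Dn (m - 1))
        = ∑ σ : Am m, ∑ e ∈ edges m (m - 1), P.De (e.image ⇑(σ : Equiv.Perm (Fin m))) :=
          Finset.sum_congr rfl fun σ _ => h1 σ
      _ = ∑ e ∈ edges m (m - 1), ∑ σ : Am m, P.De (e.image ⇑(σ : Equiv.Perm (Fin m))) :=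
          Finset.sum_comm
      _ = ∑ e ∈ edges m (m - 1), stabCard m e • P.Dn m :=
          Finset.sum_congr rfl fun e he => orbit_sum (card_of_mem_edges he) P.De
      _ = _ := (Finset.sum_smul).symm
  rw [h2, ← Nat.cast_smul_eq_nsmul ℝ, sum_stab_eq hm, lap_eq_Dn_top]

lemma hr_pos (hm : 3 ≤ m) : 0 < hr m := by
  have h1 : (3 : ℝ) ≤ (m : ℝ) := by exact_mod_cast hm
  have h2 : (0 : ℝ) < ((m - 1).factorial : ℝ) := by exact_mod_cast (m - 1).factorial_pos
  unfold SimplexSetting.hr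
  nlinarith

end PAux

/-- `Δ² - λΔ = (1/h_m²)·(Σ_{σ ∈ A_m} σ(Δ_{m-1}² - λh_mΔ_{m-1}) + X_m)`, where
`X_m = Σ_σ σ(Δ_{m-1})·Σ_{τ ≠ σ} τ(Δ_{m-1})` and `h_m = (m-2)·(m-1)!/2`. -/
theorem lap_sq_sub_smul_decomposition {m : ℕ} {G : Type*} [Group G]
    (P : SimplexSetting m G) (hm : 3 ≤ m) :
    ∀ lambda : ℝ,
      (lap P.S) ^ 2 - lambda • lap P.S =
        ((hr m) ^ 2)⁻¹ •
          ((∑ σ : alternatingGroup (Fin m),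
              P.algAct σ ((P.Dn (m - 1)) ^ 2 - (lambda * hr m) • P.Dn (m - 1))) +
            ∑ σ : alternatingGroup (Fin m),
              P.algAct σ (P.Dn (m - 1)) *
                ∑ τ ∈ Finset.univ.erase σ, P.algAct τ (P.Dn (m - 1))) := by
  classical
  intro lambda
  set c : ℝ := lambda * hr m with hc
  set A : Am m → MonoidAlgebra ℝ G := fun σ => P.algAct σ (P.Dn (m - 1)) with hA
  set D : MonoidAlgebra ℝ G := lap P.S with hD
  have hsum : ∑ σ : Am m, A σ = hr m • D := sum_algAct_Dn P hm
  have hterm : ∀ σ : Am m,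
      P.algAct σ ((P.Dn (m - 1)) ^ 2 - c • P.Dn (m - 1)) = A σ ^ 2 - c • A σ := by
    intro σ
    rw [hA]
    simp only [algAct_eq_hom, map_sub, map_pow, map_smul]
  have herase : ∀ σ : Am m,
      ∑ τ ∈ Finset.univ.erase σ, P.algAct τ (P.Dn (m - 1)) = hr m • D - A σ := by
    intro σ
    rw [← hsum]
    exact Finset.sum_erase_eq_sub (Finset.mem_univ σ)
  rw [Finset.sum_congr rfl fun σ _ => hterm σ,
    Finset.sum_congr rfl (fun (σ : Am m) _ => by rw [herase σ] :
      ∀ σ ∈ (Finset.univ : Finset (Am m)),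
        A σ * ∑ τ ∈ Finset.univ.erase σ, P.algAct τ (P.Dn (m - 1)) = A σ * (hr m • D - A σ)),
    ← Finset.sum_add_distrib,
    Finset.sum_congr rfl (fun (σ : Am m) _ => by rw [sq, mul_sub]; abel :
      ∀ σ ∈ (Finset.univ : Finset (Am m)),
        A σ ^ 2 - c • A σ + A σ * (hr m • D - A σ) = A σ * (hr m • D) - c • A σ),
    Finset.sum_sub_distrib, ← Finset.sum_mul, ← Finset.smul_sum, hsum]
  have hh : hr m ≠ 0 := ne_of_gt (hr_pos hm)
  have hh2 : (hr m) ^ 2 ≠ 0 := pow_ne_zero 2 hh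
  have key : (hr m) ^ 2 • (D ^ 2 - lambda • D) = hr m • D * (hr m • D) - c • (hr m • D) := by
    rw [smul_sub, smul_mul_assoc, mul_smul_comm, smul_smul, smul_smul, smul_smul, hc, sq, sq]
    ring_nf
  rw [← key, inv_smul_smul₀ hh2]

end
end

section
/- Let a ∈ G be an element whose word length with respect to S is at most R, where R > 1 is an integer. Then for every real ε ≥ 2^{2⌈log₂ R⌉}, the element ε·Δ − (2·1 − a⁻¹ − a) lies in Σ²_{⌈R/2⌉} ℝ[G]. -/
noncomputable section
open scoped Classical
namespace EpsLapAux

variable {G : Type*} [Group G]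

/-- shorthand -/
def u (g : G) : MonoidAlgebra ℝ G := MonoidAlgebra.of ℝ G g

lemma u_mul (g h : G) : u g * u h = u (g * h) := (map_mul (MonoidAlgebra.of ℝ G) g h).symm

lemma u_one : u (1 : G) = 1 := map_one (MonoidAlgebra.of ℝ G)

lemma starG_add (x y : MonoidAlgebra ℝ G) : starG (x + y) = starG x + starG y := by
  unfold starG; rw [MonoidAlgebra.coeff_add, Finsupp.mapDomain_add, MonoidAlgebra.ofCoeff_add]

lemma starG_smul (r : ℝ) (x : MonoidAlgebra ℝ G) : starG (r • x) = r • starG x :=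
  by unfold starG; rw [MonoidAlgebra.coeff_smul, Finsupp.mapDomain_smul, MonoidAlgebra.ofCoeff_smul]

/-- starG as an additive hom, for neg/sub lemmas -/
def starGHom : MonoidAlgebra ℝ G →+ MonoidAlgebra ℝ G where
  toFun := starG
  map_zero' := by
    unfold starG; rw [MonoidAlgebra.coeff_zero, Finsupp.mapDomain_zero, MonoidAlgebra.ofCoeff_zero]
  map_add' := starG_add

lemma starG_neg (x : MonoidAlgebra ℝ G) : starG (-x) = -starG x :=
  map_neg (starGHom (G := G)) x

lemma starG_sub (x y : MonoidAlgebra ℝ G) : starG (x - y) = starG x - starG y :=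
  map_sub (starGHom (G := G)) x y

lemma starG_single (g : G) (r : ℝ) :
    starG (MonoidAlgebra.single g r) = MonoidAlgebra.single g⁻¹ r := by
  unfold starG; rw [MonoidAlgebra.coeff_single, Finsupp.mapDomain_single]; rfl

lemma starG_of (g : G) : starG (u g) = u g⁻¹ := by
  simp [u, MonoidAlgebra.of_apply, starG_single]

lemma starG_one : starG (1 : MonoidAlgebra ℝ G) = 1 := by
  rw [← u_one (G := G), starG_of]; simp

lemma starG_two : starG (2 : MonoidAlgebra ℝ G) = 2 := by
  rw [← one_add_one_eq_two, starG_add, starG_one]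

/-! ### inBall lemmas -/

lemma inBall_one (S : Set G) (R : ℕ) : inBall S R 1 :=
  ⟨[], by simp, by simp, by simp⟩

lemma inBall_mono {S : Set G} {R R' : ℕ} (h : R ≤ R') {g : G} (hg : inBall S R g) :
    inBall S R' g := by
  obtain ⟨l, h1, h2, h3⟩ := hg
  exact ⟨l, h1, h2.trans h, h3⟩

lemma inBall_mem {S : Set G} {s : G} (hs : s ∈ S) {R : ℕ} (hR : 1 ≤ R) :
    inBall S R s :=
  ⟨[s], by simpa using hs, by simpa using hR, by simp⟩

lemma inBall_inv {S : Set G} (hsymm : ∀ s ∈ S, s⁻¹ ∈ S) {R : ℕ} {g : G}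
    (hg : inBall S R g) : inBall S R g⁻¹ := by
  obtain ⟨l, h1, h2, h3⟩ := hg
  refine ⟨(l.map fun x => x⁻¹).reverse, ?_, by simpa using h2, ?_⟩
  · intro x hx
    simp only [List.mem_reverse, List.mem_map] at hx
    obtain ⟨y, hy, rfl⟩ := hx
    exact hsymm y (h1 y hy)
  · rw [← List.prod_inv_reverse, h3]

/-! ### SOS lemmas -/

lemma SOS_zero (S : Set G) (R : ℕ) : SOS S R 0 :=
  ⟨0, fun i => 0, by simp, by simp⟩

lemma SOS_add {S : Set G} {R : ℕ} {x y : MonoidAlgebra ℝ G}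
    (hx : SOS S R x) (hy : SOS S R y) : SOS S R (x + y) := by
  obtain ⟨N, ξ, hξ, rfl⟩ := hx
  obtain ⟨M, η, hη, rfl⟩ := hy
  refine ⟨N + M, Fin.append ξ η, ?_, ?_⟩
  · intro i
    refine Fin.addCases (fun j => ?_) (fun j => ?_) i
    · rw [Fin.append_left]; exact hξ j
    · rw [Fin.append_right]; exact hη j
  · rw [Fin.sum_univ_add]
    congr 1 <;> [skip; skip] <;> exact Finset.sum_congr rfl fun j _ => by
      simp [Fin.append_left, Fin.append_right]

lemma SOS_sq {S : Set G} {R : ℕ} (ξ : MonoidAlgebra ℝ G)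
    (hξ : ∀ g ∈ ξ.coeff.support, inBall S R g) : SOS S R (starG ξ * ξ) :=
  ⟨1, fun _ => ξ, fun _ => hξ, by simp⟩

lemma SOS_mono {S : Set G} {R R' : ℕ} (h : R ≤ R') {x : MonoidAlgebra ℝ G}
    (hx : SOS S R x) : SOS S R' x := by
  obtain ⟨N, ξ, hξ, rfl⟩ := hx
  exact ⟨N, ξ, fun i g hg => inBall_mono h (hξ i g hg), rfl⟩

end EpsLapAux
end

noncomputable section
open scoped Classical
namespace EpsLapAux
variable {G : Type*} [Group G]

lemma two_eq_single : (2 : MonoidAlgebra ℝ G) = MonoidAlgebra.single 1 2 := by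
  rw [← one_add_one_eq_two, MonoidAlgebra.one_def, ← MonoidAlgebra.single_add]
  norm_num

/-- the basic square `(1-s)*(1-s) = 2 - s - s⁻¹` -/
lemma sq_one_sub (s : G) :
    starG (1 - u s) * (1 - u s) = 2 - u s - u s⁻¹ := by
  rw [starG_sub, starG_one, starG_of]
  simp only [sub_mul, mul_sub, one_mul, mul_one, u_mul, inv_mul_cancel, u_one]
  rw [← one_add_one_eq_two]
  abel

lemma supp_one_sub (s : G) : (1 - u s : MonoidAlgebra ℝ G).coeff.support ⊆ {1, s} := by
  rw [MonoidAlgebra.coeff_sub]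
  refine (Finsupp.support_sub).trans ?_
  apply Finset.union_subset
  · rw [MonoidAlgebra.one_def, MonoidAlgebra.coeff_single]
    exact (Finsupp.support_single_subset).trans (by simp)
  · rw [u, MonoidAlgebra.of_apply, MonoidAlgebra.coeff_single]
    exact (Finsupp.support_single_subset).trans (by simp)

lemma SOS_smul {S : Set G} {R : ℕ} {c : ℝ} (hc : 0 ≤ c) {x : MonoidAlgebra ℝ G}
    (hx : SOS S R x) : SOS S R (c • x) := by
  obtain ⟨N, ξ, hξ, rfl⟩ := hx
  refine ⟨N, fun i => Real.sqrt c • ξ i, ?_, ?_⟩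
  · intro i g hg
    exact hξ i g (Finsupp.support_smul (by rwa [MonoidAlgebra.coeff_smul] at hg))
  · rw [Finset.smul_sum]
    refine Finset.sum_congr rfl fun i _ => ?_
    rw [starG_smul, smul_mul_assoc, mul_smul_comm, smul_smul, Real.mul_self_sqrt hc]

lemma sum_inv_eq {S : Finset G} (hsymm : ∀ s ∈ S, s⁻¹ ∈ S) :
    ∑ s ∈ S, u s⁻¹ = ∑ s ∈ S, (u s : MonoidAlgebra ℝ G) := by
  refine Finset.sum_nbij' (fun s => s⁻¹) (fun s => s⁻¹) ?_ ?_ ?_ ?_ ?_ <;>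
    intros <;> simp_all [hsymm]

lemma two_smul_lap {S : Finset G} (hsymm : ∀ s ∈ S, s⁻¹ ∈ S) :
    (2:ℝ) • lap S = ∑ s ∈ S, ((2 : MonoidAlgebra ℝ G) - u s - u s⁻¹) := by
  have h : ∀ s : G, (2 : MonoidAlgebra ℝ G) - u s - u s⁻¹ = (1 - u s) + (1 - u s⁻¹) := by
    intro s; rw [← one_add_one_eq_two]; abel
  simp only [h]
  rw [Finset.sum_add_distrib]
  simp only [Finset.sum_sub_distrib, Finset.sum_const, sum_inv_eq hsymm]
  rw [lap, two_smul]
  simp [u, nsmul_eq_mul]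

lemma f_sos {S : Finset G} {s : G} (hs : s ∈ S) {R : ℕ} (hR : 1 ≤ R) :
    SOS ↑S R ((2 : MonoidAlgebra ℝ G) - u s - u s⁻¹) := by
  rw [← sq_one_sub]
  refine SOS_sq _ fun g hg => ?_
  rcases Finset.mem_insert.1 (supp_one_sub s hg) with rfl | hg
  · exact inBall_one _ _
  · rw [Finset.mem_singleton] at hg
    subst hg
    exact inBall_mem hs hR

lemma sum_f_sos {S : Finset G} {T : Finset G} (hT : T ⊆ S) {R : ℕ} (hR : 1 ≤ R) :
    SOS ↑S R (∑ s ∈ T, ((2 : MonoidAlgebra ℝ G) - u s - u s⁻¹)) := by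
  classical
  induction T using Finset.induction with
  | empty =>
    rw [Finset.sum_empty]
    exact SOS_zero _ _
  | insert _ _ hx ih =>
    rw [Finset.sum_insert hx]
    exact SOS_add (f_sos (hT (Finset.mem_insert_self _ _)) hR)
      (ih (fun y hy => hT (Finset.mem_insert_of_mem hy)))

lemma lap_sos {S : Finset G} (hsymm : ∀ s ∈ S, s⁻¹ ∈ S) {c : ℝ} (hc : 0 ≤ c)
    {R : ℕ} (hR : 1 ≤ R) : SOS ↑S R (c • lap S) := by
  have h : c • lap S = (c/2) • ((2:ℝ) • lap S) := by
    rw [smul_smul]; ring_nf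
  rw [h, two_smul_lap hsymm]
  exact SOS_smul (by linarith) (sum_f_sos subset_rfl hR)

lemma two_lap_sub_sos {S : Finset G} (hsymm : ∀ s ∈ S, s⁻¹ ∈ S) {s : G} (hs : s ∈ S)
    {R : ℕ} (hR : 1 ≤ R) :
    SOS ↑S R ((2:ℝ) • lap S - ((2 : MonoidAlgebra ℝ G) - u s - u s⁻¹)) := by
  have h : (2:ℝ) • lap S - ((2 : MonoidAlgebra ℝ G) - u s - u s⁻¹)
      = ∑ t ∈ S.erase s, ((2 : MonoidAlgebra ℝ G) - u t - u t⁻¹) := by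
    rw [two_smul_lap hsymm, ← Finset.add_sum_erase S _ hs]
    abel
  rw [h]
  exact sum_f_sos (Finset.erase_subset _ _) hR

/-- the key identity -/
lemma key (b c : G) :
    starG (u b⁻¹ - 2 + u c) * (u b⁻¹ - 2 + u c)
      = (2:ℝ) • ((2 : MonoidAlgebra ℝ G) - u b - u b⁻¹)
        + (2:ℝ) • ((2 : MonoidAlgebra ℝ G) - u c - u c⁻¹)
        - ((2 : MonoidAlgebra ℝ G) - u (b*c) - u (c⁻¹*b⁻¹)) := by
  rw [starG_add, starG_sub, starG_two, starG_of, starG_of, inv_inv]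
  simp only [mul_add, add_mul, sub_mul, mul_sub, u_mul, mul_inv_cancel, inv_mul_cancel,
    u_one, two_mul, mul_two, two_smul]
  rw [← one_add_one_eq_two]
  abel

end EpsLapAux
end

noncomputable section
open scoped Classical
namespace EpsLapAux
variable {G : Type*} [Group G]

lemma supp_u (g : G) : (u g : MonoidAlgebra ℝ G).coeff.support ⊆ {g} := by
  rw [u, MonoidAlgebra.of_apply, MonoidAlgebra.coeff_single]
  exact Finsupp.support_single_subset

lemma supp_q (b c : G) :
    (u b⁻¹ - 2 + u c : MonoidAlgebra ℝ G).coeff.support ⊆ {b⁻¹, 1, c} := by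
  rw [MonoidAlgebra.coeff_add, MonoidAlgebra.coeff_sub]
  refine Finsupp.support_add.trans (Finset.union_subset ?_ ?_)
  · refine Finsupp.support_sub.trans (Finset.union_subset ?_ ?_)
    · exact (supp_u b⁻¹).trans (by simp)
    · rw [two_eq_single, MonoidAlgebra.coeff_single]
      exact Finsupp.support_single_subset.trans (by simp)
  · exact (supp_u c).trans (by simp)

lemma decomp {S : Finset G} (b c : G) (C' : ℝ) :
    (4 * C') • lap S - ((2 : MonoidAlgebra ℝ G) - u (b*c)⁻¹ - u (b*c))
      = (2:ℝ) • (C' • lap S - ((2 : MonoidAlgebra ℝ G) - u b⁻¹ - u b))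
        + (2:ℝ) • (C' • lap S - ((2 : MonoidAlgebra ℝ G) - u c⁻¹ - u c))
        + starG (u b⁻¹ - 2 + u c) * (u b⁻¹ - 2 + u c) := by
  rw [key b c, mul_inv_rev]
  module

lemma decomp2 {S : Finset G} (b c : G) :
    (4:ℝ) • lap S - ((2 : MonoidAlgebra ℝ G) - u (b*c)⁻¹ - u (b*c))
      = (2:ℝ) • ((2:ℝ) • lap S - ((2 : MonoidAlgebra ℝ G) - u b - u b⁻¹)
            - ((2 : MonoidAlgebra ℝ G) - u c - u c⁻¹))
        + starG (u b⁻¹ - 2 + u c) * (u b⁻¹ - 2 + u c) := by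
  rw [key b c, mul_inv_rev]
  module

lemma two_lap_sub_two_sos {S : Finset G} (hsymm : ∀ s ∈ S, s⁻¹ ∈ S)
    {s t : G} (hs : s ∈ S) (ht : t ∈ S) (hst : ¬ (s = t ∧ s⁻¹ = s)) {R : ℕ} (hR : 1 ≤ R) :
    SOS ↑S R ((2:ℝ) • lap S - ((2 : MonoidAlgebra ℝ G) - u s - u s⁻¹)
      - ((2 : MonoidAlgebra ℝ G) - u t - u t⁻¹)) := by
  by_cases h : s = t
  · subst h
    have hne : s⁻¹ ≠ s := fun h' => hst ⟨rfl, h'⟩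
    have hs' : s⁻¹ ∈ S.erase s := Finset.mem_erase.2 ⟨hne, hsymm s hs⟩
    have heq : (2:ℝ) • lap S - ((2 : MonoidAlgebra ℝ G) - u s - u s⁻¹)
        - ((2 : MonoidAlgebra ℝ G) - u s - u s⁻¹)
        = ∑ x ∈ (S.erase s).erase s⁻¹, ((2 : MonoidAlgebra ℝ G) - u x - u x⁻¹) := by
      rw [two_smul_lap hsymm, ← Finset.add_sum_erase S _ hs, ← Finset.add_sum_erase _ _ hs',
        inv_inv]
      abel
    rw [heq]
    exact sum_f_sos (((S.erase s).erase_subset _).trans (S.erase_subset _)) hR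
  · have ht' : t ∈ S.erase s := Finset.mem_erase.2 ⟨fun h' => h h'.symm, ht⟩
    have heq : (2:ℝ) • lap S - ((2 : MonoidAlgebra ℝ G) - u s - u s⁻¹)
        - ((2 : MonoidAlgebra ℝ G) - u t - u t⁻¹)
        = ∑ x ∈ (S.erase s).erase t, ((2 : MonoidAlgebra ℝ G) - u x - u x⁻¹) := by
      rw [two_smul_lap hsymm, ← Finset.add_sum_erase S _ hs, ← Finset.add_sum_erase _ _ ht']
      abel
    rw [heq]
    exact sum_f_sos (((S.erase s).erase_subset _).trans (S.erase_subset _)) hR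

end EpsLapAux
end

noncomputable section
open scoped Classical
namespace EpsLapAux
variable {G : Type*} [Group G]

lemma sos_four_lap {S : Finset G} (hsymm : ∀ s ∈ S, s⁻¹ ∈ S) :
    SOS ↑S 1 ((4:ℝ) • lap S - ((2 : MonoidAlgebra ℝ G) - u (1:G)⁻¹ - u (1:G))) := by
  have h : (4:ℝ) • lap S - ((2 : MonoidAlgebra ℝ G) - u (1:G)⁻¹ - u (1:G))
      = (4:ℝ) • lap S := by
    have h2 : (2 : MonoidAlgebra ℝ G) = 1 + 1 := one_add_one_eq_two.symm
    rw [inv_one, u_one, h2]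
    abel
  rw [h]
  exact lap_sos hsymm (by norm_num) le_rfl

/-- base case of the induction : `R = 2`. -/
lemma base {S : Finset G} (hsymm : ∀ s ∈ S, s⁻¹ ∈ S) (a : G) (ha : inBall ↑S 2 a) :
    SOS ↑S 1 ((4:ℝ) • lap S - ((2 : MonoidAlgebra ℝ G) - u a⁻¹ - u a)) := by
  obtain ⟨l, hl, hlen, rfl⟩ := ha
  match l, hl, hlen with
  | [], hl, hlen => simpa using sos_four_lap hsymm
  | [s], hl, hlen =>
      have hs : s ∈ S := by simpa using hl s (by simp)
      have h : (4:ℝ) • lap S - ((2 : MonoidAlgebra ℝ G) - u [s].prod⁻¹ - u [s].prod)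
          = (2:ℝ) • lap S
            + ((2:ℝ) • lap S - ((2 : MonoidAlgebra ℝ G) - u s - u s⁻¹)) := by
        simp only [List.prod_cons, List.prod_nil, mul_one]
        module
      rw [h]
      exact SOS_add (lap_sos hsymm (by norm_num) le_rfl) (two_lap_sub_sos hsymm hs le_rfl)
  | [s, t], hl, hlen =>
      have hs : s ∈ S := hl s (by simp)
      have ht : t ∈ S := hl t (by simp)
      have hprod : [s, t].prod = s * t := by simp
      rw [hprod]
      by_cases hst1 : s * t = 1
      · rw [hst1]
        exact sos_four_lap hsymm
      · have hst : ¬ (s = t ∧ s⁻¹ = s) := by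
          rintro ⟨rfl, h2⟩
          refine hst1 ?_
          nth_rewrite 1 [← h2]
          exact inv_mul_cancel s
        rw [decomp2 s t]
        refine SOS_add (SOS_smul (by norm_num) (two_lap_sub_two_sos hsymm hs ht hst le_rfl)) ?_
        refine SOS_sq _ fun g hg => ?_
        have := supp_q s t hg
        simp only [Finset.mem_insert, Finset.mem_singleton] at this
        rcases this with rfl | rfl | rfl
        · exact inBall_inv hsymm (inBall_mem hs le_rfl)
        · exact inBall_one _ _
        · exact inBall_mem ht le_rfl

/-- the main induction. -/
lemma main {S : Finset G} (hsymm : ∀ s ∈ S, s⁻¹ ∈ S) :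
    ∀ R : ℕ, 2 ≤ R → ∀ a : G, inBall ↑S R a →
      SOS ↑S ((R+1)/2) (((4:ℝ) ^ Nat.clog 2 R) • lap S
        - ((2 : MonoidAlgebra ℝ G) - u a⁻¹ - u a)) := by
  intro R
  induction R using Nat.strong_induction_on with
  | _ R IH =>
  intro hR a ha
  rcases eq_or_lt_of_le hR with hR2 | hR3
  · -- R = 2
    subst hR2
    have hc : Nat.clog 2 2 = 1 := Nat.clog_eq_one le_rfl le_rfl
    rw [hc, pow_one]
    exact base hsymm a ha
  · -- R ≥ 3
    obtain ⟨l, hl, hlen, rfl⟩ := ha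
    set R' : ℕ := (R + 1) / 2 with hR'
    have hR'2 : 2 ≤ R' := by omega
    have hR'lt : R' < R := by omega
    set k : ℕ := (l.length + 1) / 2 with hk
    have hb : inBall ↑S R' (l.take k).prod := by
      refine ⟨l.take k, fun x hx => hl x (List.take_subset _ _ hx), ?_, rfl⟩
      rw [List.length_take]
      omega
    have hcball : inBall ↑S R' (l.drop k).prod := by
      refine ⟨l.drop k, fun x hx => hl x (List.drop_subset _ _ hx), ?_, rfl⟩
      rw [List.length_drop]
      omega
    have hprod : l.prod = (l.take k).prod * (l.drop k).prod :=
      (List.prod_take_mul_prod_drop l k).symm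
    have hclog : Nat.clog 2 R = Nat.clog 2 R' + 1 := by
      rw [Nat.clog_of_two_le (by norm_num) hR]
      congr 2
    have hpow : ((4:ℝ) ^ Nat.clog 2 R) = 4 * (4:ℝ) ^ Nat.clog 2 R' := by
      rw [hclog, pow_succ, mul_comm]
    rw [hprod, hpow, decomp]
    have h1 := IH R' hR'lt hR'2 _ hb
    have h2 := IH R' hR'lt hR'2 _ hcball
    have hmono : (R' + 1) / 2 ≤ R' := by omega
    refine SOS_add (SOS_add (SOS_smul (by norm_num) (SOS_mono hmono h1))
      (SOS_smul (by norm_num) (SOS_mono hmono h2))) ?_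
    refine SOS_sq _ fun g hg => ?_
    have := supp_q (l.take k).prod (l.drop k).prod hg
    simp only [Finset.mem_insert, Finset.mem_singleton] at this
    rcases this with rfl | rfl | rfl
    · exact inBall_inv hsymm hb
    · exact inBall_one _ _
    · exact hcball

end EpsLapAux
end

/-- If `a ∈ G` has word length at most `R > 1`, then for every
`ε ≥ 2^(2⌈log₂ R⌉)` the element `εΔ - (2 - a⁻¹ - a)` lies in `Σ²_{⌈R/2⌉} ℝ[G]`. -/
theorem eps_lap_sub_two_sub_a {G : Type*} [Group G] (S : Finset G)
    (h1 : (1 : G) ∉ S) (hsymm : ∀ s ∈ S, s⁻¹ ∈ S)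
    (hgen : Subgroup.closure (S : Set G) = ⊤)
    (a : G) (R : ℕ) (hR : 1 < R) (ha : inBall (↑S) R a)
    (eps : ℝ) (heps : (2 : ℝ) ^ (2 * Nat.clog 2 R) ≤ eps) :
    SOS (↑S) ((R + 1) / 2)
      (eps • lap S -
        ((2 : MonoidAlgebra ℝ G) - MonoidAlgebra.of ℝ G a⁻¹ - MonoidAlgebra.of ℝ G a)) := by
  open EpsLapAux in
  have h4 : (4:ℝ) ^ Nat.clog 2 R ≤ eps := by
    calc (4:ℝ) ^ Nat.clog 2 R = ((2:ℝ)^2) ^ Nat.clog 2 R := by norm_num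
    _ = (2:ℝ) ^ (2 * Nat.clog 2 R) := by rw [← pow_mul]
    _ ≤ eps := heps
  have hm := EpsLapAux.main hsymm R hR a ha
  have hl : SOS ↑S ((R+1)/2) ((eps - (4:ℝ) ^ Nat.clog 2 R) • lap S) :=
    EpsLapAux.lap_sos hsymm (sub_nonneg.2 h4) (by omega)
  have heq : eps • lap S -
        ((2 : MonoidAlgebra ℝ G) - MonoidAlgebra.of ℝ G a⁻¹ - MonoidAlgebra.of ℝ G a)
      = (((4:ℝ) ^ Nat.clog 2 R) • lap S
          - ((2 : MonoidAlgebra ℝ G) - EpsLapAux.u a⁻¹ - EpsLapAux.u a))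
        + (eps - (4:ℝ) ^ Nat.clog 2 R) • lap S := by
    show eps • lap S - ((2 : MonoidAlgebra ℝ G) - EpsLapAux.u a⁻¹ - EpsLapAux.u a) = _
    module
  rw [heq]
  exact EpsLapAux.SOS_add hm hl
end
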